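/- Suppose Q satisfies Q(ξ_n−η)·Q(ξ_n+iπ) = −Q(ξ_n−η+iπ)·Q(ξ_n) for all n, and assume ξ_i − ξ_j ∉ iπℤ for i ≠ j, q_i − q_j ∉ iπℤ for i ≠ j, ξ_i − q_k ∉ iπℤ and ξ_i − q_k − η ∉ iπℤ for all i, k, and Q(ξ_n−η) ≠ 0 for all n. Then for every α ∈ ℂ the diagonal scalar product reduces to a twisted Izergin determinant: S(Q²,α) = det_{1≤i,k≤N} [ 1/sinh(ξ_i−q_k) − α/sinh(ξ_i−q_k−η) ] / det_{1≤i,k≤N} [ 1/sinh(ξ_i−q_k) ]. -/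

import Mathlib

open Complex Finset

noncomputable section

def Vand {m : ℕ} (x : Fin m → ℂ) : ℂ :=
  ∏ i : Fin m, ∏ j ∈ Finset.Ioi i, Complex.sinh (x j - x i)

def trigPoly {N : ℕ} (r : Fin N → ℂ) (l : ℂ) : ℂ := ∏ j, Complex.sinh ((l - r j) / 2)
def iπ : ℂ := (Real.pi : ℂ) * Complex.I

/-- the diagonal scalar product `S(Q²,α)` -/
def SPdiag {N : ℕ} (η : ℂ) (ξ : Fin N → ℂ) (Q : ℂ → ℂ) (α : ℂ) : ℂ :=
  ∑ h : Fin N → Fin 2,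
    (∏ n, (α * Q (ξ n) ^ 2 / Q (ξ n - η) ^ 2) ^ (1 - (h n : ℕ))) *
      Vand (fun n => ξ n - ((1 - (h n : ℕ) : ℕ) : ℂ) * η) / Vand ξ

lemma sinh_half (z : ℂ) :
    Complex.sinh z = -2 * Complex.I * (Complex.sinh (z/2) * Complex.sinh ((z + (Real.pi:ℂ)*Complex.I)/2)) := by
  have h2 : Complex.exp ((z + (Real.pi:ℂ)*Complex.I)/2) = Complex.exp (z/2) * Complex.I := by
    rw [show (z + (Real.pi:ℂ)*Complex.I)/2 = z/2 + ((Real.pi:ℂ)/2) * Complex.I by ring,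
      Complex.exp_add, Complex.exp_mul_I, Complex.cos_pi_div_two, Complex.sin_pi_div_two]
    ring
  have h3 : Complex.exp (-((z + (Real.pi:ℂ)*Complex.I)/2)) = -(Complex.exp (-(z/2)) * Complex.I) := by
    rw [show -((z + (Real.pi:ℂ)*Complex.I)/2) = -(z/2) + (-((Real.pi:ℂ)/2)) * Complex.I by ring,
      Complex.exp_add, Complex.exp_mul_I]
    simp [Complex.cos_pi_div_two, Complex.sin_pi_div_two]
  show (Complex.exp z - Complex.exp (-z))/2 = _
  rw [show Complex.sinh (z/2) = (Complex.exp (z/2) - Complex.exp (-(z/2)))/2 from rfl,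
    show Complex.sinh ((z + (Real.pi:ℂ)*Complex.I)/2) = (Complex.exp ((z + (Real.pi:ℂ)*Complex.I)/2) - Complex.exp (-((z + (Real.pi:ℂ)*Complex.I)/2)))/2 from rfl,
    h2, h3, show Complex.exp z = Complex.exp (z/2) * Complex.exp (z/2) by rw [← Complex.exp_add]; ring_nf,
    show Complex.exp (-z) = Complex.exp (-(z/2)) * Complex.exp (-(z/2)) by rw [← Complex.exp_add]; ring_nf]
  ring_nf
  rw [Complex.I_sq]
  ring

lemma exp2_sub (a b : ℂ) :
    Complex.exp (2*a) - Complex.exp (2*b) = 2 * Complex.exp a * Complex.exp b * Complex.sinh (a - b) := by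
  show _ = 2 * Complex.exp a * Complex.exp b * ((Complex.exp (a-b) - Complex.exp (-(a-b)))/2)
  rw [show 2*a = (a+b)+(a-b) by ring, show 2*b = (a+b)+ -(a-b) by ring,
    Complex.exp_add, Complex.exp_add, Complex.exp_add, Complex.exp_add]
  ring

lemma sinh_ne_zero' (z : ℂ) (h : ∀ m : ℤ, z ≠ (m : ℂ) * ((Real.pi : ℂ) * Complex.I)) :
    Complex.sinh z ≠ 0 := by
  intro h0
  have : Complex.sin (z * Complex.I) = 0 := by rw [Complex.sin_mul_I, h0, zero_mul]
  rw [Complex.sin_eq_zero_iff] at this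
  obtain ⟨k, hk⟩ := this
  apply h (-k)
  push_cast
  linear_combination (-Complex.I) * hk + z * Complex.I_sq

lemma prod_Ioi_swap {n : ℕ} {M : Type*} [CommMonoid M] (f : Fin n → Fin n → M) :
    ∏ i, ∏ j ∈ Ioi i, f i j = ∏ j, ∏ i ∈ Iio j, f i j := by
  rw [Finset.prod_sigma', Finset.prod_sigma']
  exact Finset.prod_nbij' (fun x => ⟨x.2, x.1⟩) (fun x => ⟨x.2, x.1⟩)
    (by simp) (by simp) (by simp) (by simp) (by simp)

lemma erase_split {n : ℕ} {M : Type*} [CommMonoid M] (i : Fin n) (f : Fin n → M) :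
    ∏ l ∈ Finset.univ.erase i, f l = (∏ l ∈ Iio i, f l) * ∏ l ∈ Ioi i, f l := by
  have he : Finset.univ.erase i = Iio i ∪ Ioi i := by
    ext j
    simp only [Finset.mem_erase, Finset.mem_univ, and_true, Finset.mem_union, Finset.mem_Iio,
      Finset.mem_Ioi]
    exact ⟨fun h => h.lt_or_gt, fun h => by rcases h with h | h; exacts [h.ne, h.ne']⟩
  rw [he, Finset.prod_union]
  rw [Finset.disjoint_left]
  intro a h1 h2
  simp only [Finset.mem_Iio, Finset.mem_Ioi] at *
  exact lt_asymm h1 h2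

lemma count_pairs {n : ℕ} (g : Fin n → ℂ) :
    (∏ i, g i ^ (Ioi i).card) * (∏ i : Fin n, ∏ j ∈ Ioi i, g j) = (∏ i, g i) ^ (n-1) := by
  rw [prod_Ioi_swap (fun _ j => g j)]
  simp only [Finset.prod_const, Fin.card_Ioi, Fin.card_Iio]
  rw [← Finset.prod_mul_distrib, ← Finset.prod_pow]
  apply Finset.prod_congr rfl
  intro i _
  rw [← pow_add]
  congr 1
  have := i.isLt
  omega

lemma sum_card_Ioi (n : ℕ) : ∑ i : Fin n, (Ioi i).card = n * (n-1) / 2 := by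
  simp only [Fin.card_Ioi]
  rw [Fin.sum_univ_eq_sum_range (fun i => n - 1 - i)]
  induction n with
  | zero => simp
  | succ m ih =>
    rw [Finset.sum_range_succ]
    simp only [Nat.add_sub_cancel] at *
    rw [show ∑ x ∈ Finset.range m, (m - x) = ∑ x ∈ Finset.range m, ((m-1-x) + 1) from
      Finset.sum_congr rfl fun x hx => by
        simp only [Finset.mem_range] at hx; omega]
    rw [Finset.sum_add_distrib, ih]
    simp only [Finset.sum_const, Finset.card_range, smul_eq_mul, mul_one]
    have h2 : 2 ∣ m * (m-1) := (Nat.even_mul_pred_self m).two_dvd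
    have h3 : 2 ∣ (m+1) * m := by
      rcases Nat.even_or_odd m with h | h
      · exact Dvd.dvd.mul_left h.two_dvd _
      · exact Dvd.dvd.mul_right (Odd.add_one h).two_dvd _
    have h4 : m * (m-1) + 2 * m = (m+1) * m := by
      cases m with
      | zero => rfl
      | succ k => simp only [Nat.succ_sub_one]; ring
    omega

lemma evalMatrix_eq {n : ℕ} (v : Fin n → ℂ) (p : Fin n → Polynomial ℂ)
    (h : ∀ j, (p j).natDegree < n) :
    Matrix.of (fun i j => (p j).eval (v i)) =
      Matrix.vandermonde v * Matrix.of (fun i j : Fin n => (p j).coeff i) := by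
  ext i j
  rw [Matrix.mul_apply]
  simp only [Matrix.of_apply, Matrix.vandermonde]
  rw [Polynomial.eval_eq_sum_range' (h j), ← Fin.sum_univ_eq_sum_range]
  exact Finset.sum_congr rfl fun k _ => (mul_comm _ _)


lemma cauchy_det {n : ℕ} (x y : Fin n → ℂ) (hxy : ∀ i k, x i + y k ≠ 0) :
    Matrix.det (Matrix.of fun i k : Fin n => (x i + y k)⁻¹) =
      (∏ i, ∏ j ∈ Ioi i, ((x j - x i) * (y j - y i))) / ∏ i, ∏ k, (x i + y k) := by
  by_cases hinj : Function.Injective x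
  case neg =>
    simp only [Function.Injective, not_forall] at hinj
    obtain ⟨i, j, hxe, hne⟩ := hinj
    have hdet : Matrix.det (Matrix.of fun i k : Fin n => (x i + y k)⁻¹) = 0 :=
      Matrix.det_zero_of_row_eq hne (funext fun k => by simp only [Matrix.of_apply, hxe])
    have hnum : (∏ i, ∏ j ∈ Ioi i, ((x j - x i) * (y j - y i))) = 0 := by
      rcases lt_or_gt_of_ne (show i ≠ j from hne) with h | h
      · refine Finset.prod_eq_zero (Finset.mem_univ i) (Finset.prod_eq_zero (Finset.mem_Ioi.mpr h) ?_)
        rw [hxe, sub_self, zero_mul]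
      · refine Finset.prod_eq_zero (Finset.mem_univ j) (Finset.prod_eq_zero (Finset.mem_Ioi.mpr h) ?_)
        rw [← hxe, sub_self, zero_mul]
    rw [hdet, hnum, zero_div]
  case pos =>
    classical
    set p : Fin n → Polynomial ℂ := fun i => ∏ j ∈ Finset.univ.erase i,
      (Polynomial.X + Polynomial.C (x j)) with hp
    have hdeg : ∀ i, (p i).natDegree < n := by
      intro i
      have h1 : (p i).natDegree ≤ n - 1 := by
        refine le_trans (Polynomial.natDegree_prod_le _ _) ?_
        rw [Finset.sum_congr rfl (fun j _ => Polynomial.natDegree_X_add_C (x j))]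
        simp [Finset.card_erase_of_mem]
      have := i.isLt
      omega
    set Cm : Matrix (Fin n) (Fin n) ℂ := Matrix.of (fun m i : Fin n => (p i).coeff m) with hCm
    have hevaly : ∀ (z : ℂ) i, (p i).eval z = ∏ j ∈ Finset.univ.erase i, (z + x j) := by
      intro z i
      simp [hp, Polynomial.eval_prod]
    -- determinant of evaluation matrix at y
    have hNdet : Matrix.det (Matrix.of fun i k : Fin n => (p i).eval (y k)) =
        Matrix.det (Matrix.vandermonde y) * Matrix.det Cm := by
      have ht : Matrix.transpose (Matrix.of fun i k : Fin n => (p i).eval (y k)) =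
          Matrix.vandermonde y * Cm := by
        rw [hCm, ← evalMatrix_eq y p hdeg]
        ext k i
        rfl
      rw [← Matrix.det_transpose, ht, Matrix.det_mul]
    -- determinant of coefficient matrix
    have hdiag : Matrix.of (fun j i : Fin n => (p i).eval (-(x j))) =
        Matrix.diagonal (fun i => ∏ l ∈ Finset.univ.erase i, (-(x i) + x l)) := by
      ext j i
      by_cases hji : j = i
      · subst hji
        rw [Matrix.diagonal_apply_eq, Matrix.of_apply, hevaly]
      · rw [Matrix.diagonal_apply_ne _ hji, Matrix.of_apply, hevaly]
        refine Finset.prod_eq_zero (Finset.mem_erase.mpr ⟨hji, Finset.mem_univ j⟩) ?_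
        ring
    have hCdet : Matrix.det (Matrix.vandermonde (fun j => -(x j))) * Matrix.det Cm
        = ∏ i, ∏ l ∈ Finset.univ.erase i, (-(x i) + x l) := by
      rw [← Matrix.det_mul, ← evalMatrix_eq (fun j => -(x j)) p hdeg, hdiag, Matrix.det_diagonal]
    have hVneg : Matrix.det (Matrix.vandermonde (fun j => -(x j))) =
        ∏ i, ∏ j ∈ Ioi i, (x i - x j) := by
      rw [Matrix.det_vandermonde]
      exact Finset.prod_congr rfl fun i _ => Finset.prod_congr rfl fun j _ => by ring
    have hVneg_ne : (∏ i, ∏ j ∈ Ioi i, (x i - x j)) ≠ 0 := by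
      rw [Finset.prod_ne_zero_iff]
      intro i _
      rw [Finset.prod_ne_zero_iff]
      intro j hj
      rw [Finset.mem_Ioi] at hj
      exact sub_ne_zero.mpr (fun hc => hj.ne' (hinj hc.symm))
    have hsplit : (∏ i, ∏ l ∈ Finset.univ.erase i, (-(x i) + x l)) =
        (∏ i, ∏ j ∈ Ioi i, (x j - x i)) * ∏ i, ∏ j ∈ Ioi i, (x i - x j) := by
      have h1 : ∀ i : Fin n, ∏ l ∈ Finset.univ.erase i, (-(x i) + x l) =
          (∏ l ∈ Iio i, (x l - x i)) * ∏ l ∈ Ioi i, (x l - x i) := by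
        intro i
        rw [Finset.prod_congr rfl (fun l _ => show -(x i) + x l = x l - x i by ring)]
        exact erase_split i _
      rw [Finset.prod_congr rfl fun i _ => h1 i, Finset.prod_mul_distrib]
      rw [← prod_Ioi_swap (fun l i => x l - x i)]
      ring
    have hCmdet : Matrix.det Cm = ∏ i, ∏ j ∈ Ioi i, (x j - x i) := by
      have := hCdet
      rw [hVneg, hsplit] at this
      have h2 : (∏ i, ∏ j ∈ Ioi i, (x i - x j)) * Matrix.det Cm =
          (∏ i, ∏ j ∈ Ioi i, (x i - x j)) * ∏ i, ∏ j ∈ Ioi i, (x j - x i) := by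
        rw [this]; ring
      exact mul_left_cancel₀ hVneg_ne h2
    -- the matrix decomposition
    have hprod_ne : ∀ k, (∏ l, (x l + y k)) ≠ 0 := fun k =>
      Finset.prod_ne_zero_iff.mpr fun l _ => hxy l k
    have hM : (Matrix.of fun i k : Fin n => (x i + y k)⁻¹) =
        Matrix.of (fun i k : Fin n => (∏ l, (x l + y k))⁻¹ *
          (Matrix.of fun i k : Fin n => (p i).eval (y k)) i k) := by
      ext i k
      rw [Matrix.of_apply, Matrix.of_apply, Matrix.of_apply, hevaly,
        Finset.prod_congr rfl (fun j _ => show y k + x j = x j + y k by ring),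
        ← Finset.mul_prod_erase _ _ (Finset.mem_univ i), mul_inv, mul_assoc,
        inv_mul_cancel₀ (Finset.prod_ne_zero_iff.mpr fun l _ => hxy l k), mul_one]
    rw [hM, Matrix.det_mul_row, hNdet, hCmdet, Matrix.det_vandermonde]
    rw [Finset.prod_congr rfl (fun i (_ : i ∈ univ) => Finset.prod_mul_distrib),
      Finset.prod_mul_distrib, Finset.prod_inv_distrib]
    have hden : (∏ i, ∏ k, (x i + y k)) ≠ 0 :=
      Finset.prod_ne_zero_iff.mpr fun i _ => Finset.prod_ne_zero_iff.mpr fun k _ => hxy i k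
    have hcomm : (∏ i : Fin n, ∏ l : Fin n, (x l + y i)) = ∏ i, ∏ k, (x i + y k) :=
      Finset.prod_comm
    rw [hcomm, eq_div_iff hden, inv_mul_eq_div, div_mul_eq_mul_div, mul_comm]
    rw [div_eq_iff hden]
    ring


lemma sinh_cauchy {n : ℕ} (hn : 1 ≤ n) (u q : Fin n → ℂ)
    (hs : ∀ i k, Complex.sinh (u i - q k) ≠ 0) :
    Matrix.det (Matrix.of fun i k : Fin n => (Complex.sinh (u i - q k))⁻¹) =
      (-1 : ℂ) ^ (n * (n-1) / 2) * Vand u * Vand q / ∏ i, ∏ k, Complex.sinh (u i - q k) := by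
  set c := n * (n-1) / 2 with hc
  set X : Fin n → ℂ := fun i => Complex.exp (2 * u i) with hX
  set Y : Fin n → ℂ := fun k => -Complex.exp (2 * q k) with hY
  have hXY : ∀ i k, X i + Y k = 2 * Complex.exp (u i) * Complex.exp (q k) * Complex.sinh (u i - q k) := by
    intro i k
    rw [hX, hY]
    simp only [← sub_eq_add_neg]
    exact exp2_sub _ _
  have hne : ∀ i k, X i + Y k ≠ 0 := by
    intro i k
    rw [hXY i k]
    exact mul_ne_zero (mul_ne_zero (mul_ne_zero two_ne_zero (Complex.exp_ne_zero _))
      (Complex.exp_ne_zero _)) (hs i k)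
  have hM : (Matrix.of fun i k : Fin n => (Complex.sinh (u i - q k))⁻¹) =
      Matrix.of (fun i k : Fin n => (2 * Complex.exp (u i)) *
        ((Matrix.of fun i k : Fin n => Complex.exp (q k) *
          ((Matrix.of fun i k : Fin n => (X i + Y k)⁻¹) i k)) i k)) := by
    ext i k
    simp only [Matrix.of_apply]
    rw [hXY i k]
    have h1 := hs i k
    have h2 := Complex.exp_ne_zero (u i)
    have h3 := Complex.exp_ne_zero (q k)
    field_simp
  rw [hM, Matrix.det_mul_column, Matrix.det_mul_row, cauchy_det X Y hne]
  set E := ∏ i, Complex.exp (u i) with hE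
  set F := ∏ i, Complex.exp (q i) with hF
  set D := ∏ i, ∏ k, Complex.sinh (u i - q k) with hD
  have hA : (∏ i, ∏ j ∈ Ioi i, ((X j - X i) * (Y j - Y i))) =
      (-4 : ℂ)^c * (E^(n-1) * (F^(n-1) * (Vand u * Vand q))) := by
    have h1 : ∀ i : Fin n, ∀ j ∈ Ioi i, (X j - X i) * (Y j - Y i) =
        (-4 : ℂ) * ((Complex.exp (u i) * Complex.exp (u j)) *
          ((Complex.exp (q i) * Complex.exp (q j)) *
            (Complex.sinh (u j - u i) * Complex.sinh (q j - q i)))) := by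
      intro i j _
      rw [hX, hY]
      simp only
      rw [show Complex.exp (2 * u j) - Complex.exp (2 * u i) =
          2 * Complex.exp (u j) * Complex.exp (u i) * Complex.sinh (u j - u i) from exp2_sub _ _,
        show -Complex.exp (2 * q j) - -Complex.exp (2 * q i) =
          -(Complex.exp (2 * q j) - Complex.exp (2 * q i)) by ring,
        show Complex.exp (2 * q j) - Complex.exp (2 * q i) =
          2 * Complex.exp (q j) * Complex.exp (q i) * Complex.sinh (q j - q i) from exp2_sub _ _]
      ring
    rw [Finset.prod_congr rfl fun i _ => Finset.prod_congr rfl (h1 i)]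
    simp only [Finset.prod_mul_distrib, Finset.prod_const]
    rw [Finset.prod_pow_eq_pow_sum, sum_card_Ioi, count_pairs (fun i => Complex.exp (u i)),
      count_pairs (fun i => Complex.exp (q i))]
    simp only [Vand, hE, hF, hc]
  have hB : (∏ i, ∏ k, (X i + Y k)) = 2^(n*n) * (E^n * (F^n * D)) := by
    rw [Finset.prod_congr rfl fun i (_ : i ∈ univ) => Finset.prod_congr rfl fun k (_ : k ∈ univ) => hXY i k]
    simp only [Finset.prod_mul_distrib, Finset.prod_const, Finset.card_univ, Fintype.card_fin,
      Finset.prod_pow]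
    rw [hE, hF, hD, ← pow_mul]
    ring
  have hDne : D ≠ 0 :=
    Finset.prod_ne_zero_iff.mpr fun i _ => Finset.prod_ne_zero_iff.mpr fun k _ => hs i k
  have hEne : E ≠ 0 := Finset.prod_ne_zero_iff.mpr fun i _ => Complex.exp_ne_zero _
  have hFne : F ≠ 0 := Finset.prod_ne_zero_iff.mpr fun i _ => Complex.exp_ne_zero _
  have hrow : (∏ i, (2 * Complex.exp (u i))) = 2^n * E := by
    rw [Finset.prod_mul_distrib, Finset.prod_const, Finset.card_univ, Fintype.card_fin, hE]
  have key : (2:ℂ)^n * E * F * ((-4)^c * (E^(n-1) * (F^(n-1) * (Vand u * Vand q)))) =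
      (-1)^c * Vand u * Vand q * (2^(n*n) * (E^n * (F^n * 1))) := by
    have h4 : (-4:ℂ)^c = (-1)^c * 2^(2*c) := by
      rw [show (-4:ℂ) = -1 * 2^2 by norm_num, mul_pow, ← pow_mul]
    have hEp : E^(n-1) * E = E^n := by
      rw [← pow_succ]
      congr 1
      omega
    have hFp : F^(n-1) * F = F^n := by
      rw [← pow_succ]
      congr 1
      omega
    have h2c : (2:ℂ)^n * 2^(2*c) = 2^(n*n) := by
      rw [← pow_add]
      congr 1
      have h5 : 2 * c = n * (n-1) := by
        rw [hc]
        exact Nat.mul_div_cancel' (Nat.even_mul_pred_self n).two_dvd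
      have h6 : n + n * (n-1) = n * n := by
        cases n with
        | zero => rfl
        | succ m => simp only [Nat.succ_sub_one]; ring
      omega
    calc (2:ℂ)^n * E * F * ((-4)^c * (E^(n-1) * (F^(n-1) * (Vand u * Vand q))))
        = ((2:ℂ)^n * 2^(2*c)) * (E^(n-1) * E) * (F^(n-1) * F) * ((-1)^c * (Vand u * Vand q)) := by
          rw [h4]; ring
      _ = (-1)^c * Vand u * Vand q * (2^(n*n) * (E^n * (F^n * 1))) := by
          rw [hEp, hFp, h2c]; ring
  rw [hA, hB, hrow]
  rw [show (2:ℂ)^n * E * (F * ((-4) ^ c * (E ^ (n - 1) * (F ^ (n - 1) * (Vand u * Vand q))) /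
        (2 ^ (n * n) * (E ^ n * (F ^ n * D))))) =
      (2^n * E * (F * ((-4) ^ c * (E ^ (n - 1) * (F ^ (n - 1) * (Vand u * Vand q)))))) /
        (2 ^ (n * n) * (E ^ n * (F ^ n * D))) by ring]
  rw [div_eq_div_iff (by exact mul_ne_zero (pow_ne_zero _ two_ne_zero) (mul_ne_zero (pow_ne_zero _ hEne) (mul_ne_zero (pow_ne_zero _ hFne) hDne))) hDne]
  calc 2 ^ n * E * (F * ((-4:ℂ) ^ c * (E ^ (n - 1) * (F ^ (n - 1) * (Vand u * Vand q))))) * D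
      = ((2:ℂ)^n * E * F * ((-4)^c * (E^(n-1) * (F^(n-1) * (Vand u * Vand q))))) * D := by ring
    _ = ((-1)^c * Vand u * Vand q * (2^(n*n) * (E^n * (F^n * 1)))) * D := by rw [key]
    _ = (-1) ^ c * Vand u * Vand q * (2 ^ (n * n) * (E ^ n * (F ^ n * D))) := by ring


lemma fin2 (t : Fin 2) : t = 0 ∨ t = 1 := by fin_cases t <;> simp

lemma prod_sinh {N : ℕ} (q : Fin N → ℂ) (l : ℂ) :
    ∏ k, Complex.sinh (l - q k) = (-2 * Complex.I)^N * (trigPoly q l * trigPoly q (l + iπ)) := by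
  unfold trigPoly iπ
  rw [Finset.prod_congr rfl fun k (_ : k ∈ univ) => sinh_half (l - q k)]
  simp only [Finset.prod_mul_distrib, Finset.prod_const, Finset.card_univ, Fintype.card_fin]
  rw [Finset.prod_congr rfl fun k (_ : k ∈ univ) =>
    show Complex.sinh ((l - q k + (Real.pi:ℂ)*Complex.I)/2) =
      Complex.sinh ((l + (Real.pi:ℂ)*Complex.I - q k)/2) from by ring_nf]
  ring

lemma det_two_sum {N : ℕ} (g : Fin N → Fin 2 → (Fin N → ℂ)) :
    Matrix.det (Matrix.of fun i k => g i 0 k + g i 1 k) =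
      ∑ h : Fin N → Fin 2, Matrix.det (Matrix.of fun i k => g i (h i) k) := by
  have h0 : (Matrix.of fun i k => g i 0 k + g i 1 k : Matrix (Fin N) (Fin N) ℂ) =
      fun i => ∑ t : Fin 2, g i t := by
    ext i k
    rw [Fin.sum_univ_two]
    rfl
  show Matrix.detRowAlternating _ = _
  rw [h0]
  exact (Matrix.detRowAlternating :
    (Fin N → ℂ) [⋀^Fin N]→ₗ[ℂ] ℂ).toMultilinearMap.map_sum g

lemma beta_eq {N : ℕ} (η α : ℂ) (ξi : ℂ) (q : Fin N → ℂ)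
    (hB : trigPoly q (ξi - η) ≠ 0)
    (hB' : trigPoly q (ξi - η + iπ) ≠ 0)
    (hper : trigPoly q (ξi - η) * trigPoly q (ξi + iπ) =
      -(trigPoly q (ξi - η + iπ) * trigPoly q ξi)) :
    α * trigPoly q ξi ^ 2 / trigPoly q (ξi - η) ^ 2 * ∏ k, Complex.sinh (ξi - η - q k)
      = -α * ∏ k, Complex.sinh (ξi - q k) := by
  rw [prod_sinh q (ξi - η), prod_sinh q ξi]
  field_simp
  linear_combination (α * trigPoly q ξi) * hper



/-- The diagonal scalar product reduces to a twisted Izergin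
determinant. -/
theorem diagonal_scalar_product_izergin (N : ℕ) (hN : 1 ≤ N) (η : ℂ)
    (ξ q : Fin N → ℂ) (Q : ℂ → ℂ) (hQ : Q = trigPoly q)
    (hV : Vand ξ ≠ 0)
    (hQξη : ∀ n, Q (ξ n - η) ≠ 0)
    (hQper : ∀ n, Q (ξ n - η) * Q (ξ n + iπ) = -(Q (ξ n - η + iπ) * Q (ξ n)))
    (hξξ : ∀ i j, i ≠ j → ∀ m : ℤ, ξ i - ξ j ≠ (m : ℂ) * iπ)
    (hqq : ∀ i j, i ≠ j → ∀ m : ℤ, q i - q j ≠ (m : ℂ) * iπ)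
    (hξq : ∀ i k, ∀ m : ℤ, ξ i - q k ≠ (m : ℂ) * iπ)
    (hξqη : ∀ i k, ∀ m : ℤ, ξ i - q k - η ≠ (m : ℂ) * iπ)
    (α : ℂ) :
    SPdiag η ξ Q α =
      Matrix.det (Matrix.of (fun i k : Fin N =>
          1 / Complex.sinh (ξ i - q k) - α / Complex.sinh (ξ i - q k - η))) /
        Matrix.det (Matrix.of (fun i k : Fin N => 1 / Complex.sinh (ξ i - q k))) := by
  subst hQ
  set c := N * (N-1) / 2 with hc
  have hsinq : ∀ i k, Complex.sinh (ξ i - q k) ≠ 0 := by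
    intro i k
    apply sinh_ne_zero'
    intro m
    exact hξq i k m
  have hsinqη : ∀ i k, Complex.sinh (ξ i - η - q k) ≠ 0 := by
    intro i k
    apply sinh_ne_zero'
    intro m hm
    apply hξqη i k m
    show ξ i - q k - η = (m:ℂ) * ((Real.pi:ℂ) * Complex.I)
    linear_combination hm
  have hVq : Vand q ≠ 0 := by
    rw [Vand, Finset.prod_ne_zero_iff]
    intro i _
    rw [Finset.prod_ne_zero_iff]
    intro j hj
    rw [Finset.mem_Ioi] at hj
    apply sinh_ne_zero'
    intro m
    exact hqq j i hj.ne' m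
  have hDξ : (∏ i, ∏ k, Complex.sinh (ξ i - q k)) ≠ 0 :=
    Finset.prod_ne_zero_iff.mpr fun i _ => Finset.prod_ne_zero_iff.mpr fun k _ => hsinq i k
  have hden : Matrix.det (Matrix.of (fun i k : Fin N => 1 / Complex.sinh (ξ i - q k))) =
      (-1 : ℂ)^c * Vand ξ * Vand q / ∏ i, ∏ k, Complex.sinh (ξ i - q k) := by
    simp only [one_div]
    exact sinh_cauchy hN ξ q hsinq
  have hden_ne : Matrix.det (Matrix.of (fun i k : Fin N => 1 / Complex.sinh (ξ i - q k))) ≠ 0 := by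
    rw [hden]
    exact div_ne_zero (mul_ne_zero (mul_ne_zero (pow_ne_zero _ (by norm_num)) hV) hVq) hDξ
  rw [eq_div_iff hden_ne]
  -- expand the numerator determinant by multilinearity
  set g : Fin N → Fin 2 → (Fin N → ℂ) := fun i t k =>
    if t = 1 then (Complex.sinh (ξ i - q k))⁻¹ else -α * (Complex.sinh (ξ i - η - q k))⁻¹ with hg
  have hnum : (Matrix.of (fun i k : Fin N =>
      1 / Complex.sinh (ξ i - q k) - α / Complex.sinh (ξ i - q k - η))) =
      Matrix.of (fun i k => g i 0 k + g i 1 k) := by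
    ext i k
    simp only [Matrix.of_apply, hg, if_true, if_neg (by decide : ¬((0 : Fin 2) = 1)),
      if_pos rfl]
    rw [show ξ i - q k - η = ξ i - η - q k by ring, one_div, div_eq_mul_inv]
    ring
  rw [hnum, det_two_sum g, SPdiag, Finset.sum_mul]
  apply Finset.sum_congr rfl
  intro h _
  -- per-term identity
  set w : Fin N → ℂ := fun n => ξ n - ((1 - (h n : ℕ) : ℕ) : ℂ) * η with hw
  set v : Fin N → ℂ := fun i => if h i = 1 then 1 else -α with hv
  have hwq : ∀ i k, (h i = 1 → w i - q k = ξ i - q k) ∧ (h i = 0 → w i - q k = ξ i - η - q k) := by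
    intro i k
    constructor <;>
      (intro hh
       simp only [hw, hh, Fin.val_one, Fin.val_zero, Nat.sub_self, Nat.sub_zero,
         Nat.cast_zero, Nat.cast_one]
       ring)
  have hsw : ∀ i k, Complex.sinh (w i - q k) ≠ 0 := by
    intro i k
    rcases fin2 (h i) with h0 | h1
    · rw [(hwq i k).2 h0]; exact hsinqη i k
    · rw [(hwq i k).1 h1]; exact hsinq i k
  have hgh : (Matrix.of fun i k => g i (h i) k) =
      Matrix.of (fun i k => v i *
        ((Matrix.of fun i k : Fin N => (Complex.sinh (w i - q k))⁻¹) i k)) := by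
    ext i k
    simp only [Matrix.of_apply, hg, hv]
    rcases fin2 (h i) with h0 | h1
    · rw [h0, (hwq i k).2 h0]
      norm_num
    · rw [h1, (hwq i k).1 h1]
      norm_num
  rw [hgh, Matrix.det_mul_column, sinh_cauchy hN w q hsw]
  have hDw : (∏ i, ∏ k, Complex.sinh (w i - q k)) ≠ 0 :=
    Finset.prod_ne_zero_iff.mpr fun i _ => Finset.prod_ne_zero_iff.mpr fun k _ => hsw i k
  -- key scalar identity, taken over all rows
  have hkey : ∀ i, (α * trigPoly q (ξ i) ^ 2 / trigPoly q (ξ i - η) ^ 2) ^ (1 - (h i : ℕ)) *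
      (∏ k, Complex.sinh (w i - q k)) = v i * ∏ k, Complex.sinh (ξ i - q k) := by
    intro i
    rcases fin2 (h i) with h0 | h1
    · have hB' : trigPoly q (ξ i - η + iπ) ≠ 0 := by
        rw [trigPoly, Finset.prod_ne_zero_iff]
        intro k _
        apply sinh_ne_zero'
        intro m hm
        apply hξqη i k (2*m - 1)
        rw [show iπ = (Real.pi:ℂ) * Complex.I from rfl] at hm ⊢
        push_cast
        linear_combination 2 * hm
      have e1 : (1 - ((h i : ℕ))) = 1 := by rw [h0]; rfl
      have e2 : v i = -α := by rw [hv]; simp only [h0]; norm_num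
      rw [e1, pow_one, e2,
        show (∏ k, Complex.sinh (w i - q k)) = ∏ k, Complex.sinh (ξ i - η - q k) from
          Finset.prod_congr rfl fun k _ => by rw [(hwq i k).2 h0]]
      exact beta_eq η α (ξ i) q (hQξη i) hB' (hQper i)
    · have e1 : (1 - ((h i : ℕ))) = 0 := by rw [h1]; rfl
      have e2 : v i = 1 := by rw [hv]; simp only [h1]; norm_num
      rw [e1, pow_zero, e2, one_mul, one_mul]
      exact Finset.prod_congr rfl fun k _ => by rw [(hwq i k).1 h1]
  have hprod : (∏ i, (α * trigPoly q (ξ i) ^ 2 / trigPoly q (ξ i - η) ^ 2) ^ (1 - (h i : ℕ))) *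
      (∏ i, ∏ k, Complex.sinh (w i - q k)) = (∏ i, v i) * ∏ i, ∏ k, Complex.sinh (ξ i - q k) := by
    rw [← Finset.prod_mul_distrib, ← Finset.prod_mul_distrib]
    exact Finset.prod_congr rfl fun i _ => hkey i
  rw [hden]
  set P := ∏ i, (α * trigPoly q (ξ i) ^ 2 / trigPoly q (ξ i - η) ^ 2) ^ (1 - (h i : ℕ)) with hP
  set Vw := Vand w with hVw
  set Dw := ∏ i, ∏ k, Complex.sinh (w i - q k) with hDwd
  set Dξ := ∏ i, ∏ k, Complex.sinh (ξ i - q k) with hDξd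
  field_simp
  linear_combination ((-1:ℂ)^c * Vw) * hprod

end
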